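/- arXiv:1106.3874 — 11 statements merged into one kernel-verified Lean document; each statement's English description precedes it below -/
import Mathlib

section
/- If X and Y are n-tuples of nonempty subsets of N such that every unordered section of X is an unordered section of Y (i.e. X ⊑ Y), then for every index j in {1,…,n} there exists an index i such that X_i ⊆ Y_j. -/
open scoped Classical

/-- Characteristic vector of `a` along the tuple `Z`. -/
noncomputable def chi {N : Type*} {n : ℕ} (Z : Fin n → Set N) (a : N) : Fin n → Bool :=
  fun i => decide (a ∈ Z i)

/-- Weight: number of `true` coordinates. -/
def wt {n : ℕ} (u : Fin n → Bool) : ℕ :=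
  (Finset.univ.filter fun i => u i = true).card

/-- The set of unordered sections of the tuple `X`. -/
def Sec {N : Type*} {n : ℕ} (X : Fin n → Set N) : Set (Multiset N) :=
  { m | ∃ a : Fin n → N, ∃ σ : Equiv.Perm (Fin n),
      (∀ i, a i ∈ X (σ i)) ∧ m = (List.ofFn a : Multiset N) }

/-- Lift of a boolean function to tuples of sets. -/
noncomputable def liftFn {N : Type*} {n m : ℕ}
    (f : (Fin n → Bool) → (Fin m → Bool)) (Y : Fin n → Set N) : Fin m → Set N :=
  fun i => { a | f (chi Y a) i = true }

theorem stmt0 {N : Type*} {n : ℕ} (X Y : Fin n → Set N)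
    (hX : ∀ i, (X i).Nonempty) (hY : ∀ i, (Y i).Nonempty)
    (h : Sec X ⊆ Sec Y) :
    ∀ j : Fin n, ∃ i : Fin n, X i ⊆ Y j := by
  intro j
  by_contra hc
  push_neg at hc
  choose a ha hna using fun i => Set.not_subset.mp (hc i)
  have hm : (List.ofFn a : Multiset N) ∈ Sec X := ⟨a, Equiv.refl _, fun i => ha i, rfl⟩
  obtain ⟨b, σ, hb, hbm⟩ := h hm
  have hmem : b (σ.symm j) ∈ (List.ofFn b : Multiset N) := by
    simp [List.mem_ofFn]
  rw [← hbm] at hmem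
  simp [List.mem_ofFn] at hmem
  obtain ⟨i, hi⟩ := hmem
  have hbj := hb (σ.symm j)
  rw [Equiv.apply_symm_apply] at hbj
  exact hna i (hi ▸ hbj)
end

section
/- If X and Y are n-tuples of nonempty subsets of N with Sec(X) = Sec(Y), then there exist indices i₀, j₀ such that X_{i₀} = Y_{j₀}. -/
open scoped Classical

lemma key_lemma {N : Type*} {n : ℕ} (X Y : Fin n → Set N)
    (h : Sec X = Sec Y) {S : Set N} (i : Fin n) (hi : X i ⊆ S) :
    ∃ j, Y j ⊆ S := by
  by_contra hc
  push_neg at hc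
  choose b hb1 hb2 using fun j => Set.not_subset.mp (hc j)
  have hm : (List.ofFn b : Multiset N) ∈ Sec Y :=
    ⟨b, Equiv.refl _, fun k => hb1 k, rfl⟩
  rw [← h] at hm
  obtain ⟨a, σ, ha, hm⟩ := hm
  have hS : a (σ.symm i) ∈ S := hi (by simpa using ha (σ.symm i))
  have hmem : a (σ.symm i) ∈ (List.ofFn b : Multiset N) := by
    rw [hm]
    simp [List.mem_ofFn]
  rw [Multiset.mem_coe, List.mem_ofFn] at hmem
  obtain ⟨l, hl⟩ := hmem
  exact hb2 l (hl ▸ hS)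

theorem stmt1 {N : Type*} {n : ℕ} (hn : 1 ≤ n) (X Y : Fin n → Set N)
    (hX : ∀ i, (X i).Nonempty) (hY : ∀ i, (Y i).Nonempty)
    (h : Sec X = Sec Y) :
    ∃ i₀ j₀ : Fin n, X i₀ = Y j₀ := by
  have h0 : (0 : ℕ) < n := hn
  let i0 : Fin n := ⟨0, h0⟩
  classical
  -- finite family of all sets
  let F : Finset (Set N) := Finset.univ.image X ∪ Finset.univ.image Y
  have hFne : F.Nonempty := ⟨X i0, by simp [F]⟩
  obtain ⟨S, hSF, hmin⟩ := F.exists_minimal hFne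
  have hmin' : ∀ T ∈ F, T ⊆ S → T = S := by
    intro T hT hTS
    by_contra hne
    exact hne (le_antisymm hTS (hmin hT hTS))
  simp only [F, Finset.mem_union, Finset.mem_image, Finset.mem_univ, true_and] at hSF
  rcases hSF with ⟨i, hi⟩ | ⟨j, hj⟩
  · obtain ⟨j, hjS⟩ := key_lemma X Y h i (hi.le)
    have : Y j = S := hmin' (Y j) (by simp [F]) hjS
    exact ⟨i, j, by rw [hi, this]⟩
  · obtain ⟨i, hiS⟩ := key_lemma Y X h.symm j (hj.le)
    have : X i = S := hmin' (X i) (by simp [F]) hiS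
    exact ⟨i, j, by rw [hj, this]⟩
end

section
/- For any n-tuple X = (X_1,…,X_n) of nonempty subsets of N, the 'division' of Sec(X) by X_1 equals Sec(X_2,…,X_n); that is, a multiset (a_2,…,a_n) of size n−1 satisfies: for all a ∈ X_1 the multiset (a,a_2,…,a_n) is an unordered section of X — if and only if (a_2,…,a_n) is an unordered section of (X_2,…,X_n). -/
open scoped Classical

lemma ofFn_coe_eq_map {N : Type*} {k : ℕ} (f : Fin k → N) :
    ((List.ofFn f : List N) : Multiset N) = Multiset.map f Finset.univ.val := by
  rw [List.ofFn_eq_map]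
  rfl

lemma ofFn_comp_perm {N : Type*} {k : ℕ} (f : Fin k → N) (σ : Equiv.Perm (Fin k)) :
    ((List.ofFn (f ∘ σ) : List N) : Multiset N) = ((List.ofFn f : List N) : Multiset N) := by
  rw [ofFn_coe_eq_map, ofFn_coe_eq_map, ← Multiset.map_map]
  congr 1
  have := Finset.map_univ_equiv σ
  calc Multiset.map (⇑σ) Finset.univ.val
      = (Finset.univ.map σ.toEmbedding).val := rfl
    _ = Finset.univ.val := by rw [Finset.map_univ_equiv]

lemma sec_iff {N : Type*} {k : ℕ} (X : Fin k → Set N) (m : Multiset N) :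
    m ∈ Sec X ↔ ∃ b : Fin k → N, (∀ i, b i ∈ X i) ∧ ((List.ofFn b : List N) : Multiset N) = m := by
  constructor
  · rintro ⟨a, σ, ha, rfl⟩
    refine ⟨a ∘ σ.symm, fun i => by simpa using ha (σ.symm i), ?_⟩
    exact ofFn_comp_perm a σ.symm
  · rintro ⟨b, hb, rfl⟩
    exact ⟨b, 1, by simpa using hb, rfl⟩

lemma countP_ofFn {N : Type*} {k : ℕ} (b : Fin k → N) (p : N → Prop) [DecidablePred p] :
    Multiset.countP p ((List.ofFn b : List N) : Multiset N)
      = (Finset.univ.filter fun i => p (b i)).card := by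
  rw [ofFn_coe_eq_map, Multiset.countP_map]
  rfl

theorem stmt2 {N : Type*} {n : ℕ} (X : Fin (n + 1) → Set N)
    (hX : ∀ i, (X i).Nonempty) (m : Multiset N) (hm : Multiset.card m = n) :
    (∀ a ∈ X 0, (a ::ₘ m) ∈ Sec X) ↔ m ∈ Sec (fun i : Fin n => X i.succ) := by
  constructor
  · intro h
    -- enumerate m as a function g : Fin n → N
    obtain ⟨g, hg⟩ : ∃ g : Fin n → N, ((List.ofFn g : List N) : Multiset N) = m := by
      have hlen : m.toList.length = n := by rw [← Multiset.coe_card, Multiset.coe_toList, hm]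
      refine ⟨fun i => m.toList.get (Fin.cast hlen.symm i), ?_⟩
      have : List.ofFn (fun i : Fin n => m.toList.get (Fin.cast hlen.symm i)) = m.toList := by
        apply List.ext_get
        · simp [hlen]
        · intro i h1 h2
          simp [List.get_ofFn]
      rw [this, Multiset.coe_toList]
    set t : Fin n → Finset (Fin n) :=
      fun j => Finset.univ.filter (fun p => g p ∈ X j.succ) with ht
    have hall : ∀ s : Finset (Fin n), s.card ≤ (s.biUnion t).card := by
      intro s
      by_contra hlt
      push_neg at hlt
      set U : Set N := ⋃ j ∈ s, X j.succ with hU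
      set B : Finset (Fin n) := s.biUnion t with hBdef
      have hB : B = Finset.univ.filter (fun p => g p ∈ U) := by
        ext p
        simp [hBdef, ht, hU]
      have hcntm : ∀ (S : Set N), (∀ p : Fin n, g p ∈ U → g p ∈ S) → (∀ p : Fin n, g p ∈ S → g p ∈ U) →
          Multiset.countP (· ∈ S) m = B.card := by
        intro S h1 h2
        rw [← hg, countP_ofFn, hB]
        congr 1
        ext p
        simp only [Finset.mem_filter, Finset.mem_univ, true_and]
        exact ⟨h2 p, h1 p⟩
      -- for each a ∈ X 0, counting with U shows a ∈ U
      have hA : ∀ a ∈ X 0, a ∈ U := by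
        intro a ha
        obtain ⟨b, hb, hbm⟩ := (sec_iff X (a ::ₘ m)).mp (h a ha)
        have h1 : s.card ≤ Multiset.countP (· ∈ U) (a ::ₘ m) := by
          rw [← hbm, countP_ofFn]
          have : s.map ⟨Fin.succ, Fin.succ_injective n⟩ ⊆
              Finset.univ.filter (fun i => b i ∈ U) := by
            intro i hi
            simp only [Finset.mem_map, Function.Embedding.coeFn_mk] at hi
            obtain ⟨j, hj, rfl⟩ := hi
            simp only [Finset.mem_filter, Finset.mem_univ, true_and]
            exact Set.mem_biUnion hj (hb j.succ)
          calc s.card = (s.map ⟨Fin.succ, Fin.succ_injective n⟩).card := (Finset.card_map _).symm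
            _ ≤ _ := Finset.card_le_card this
        have h2 : Multiset.countP (· ∈ U) m = B.card := hcntm U (fun _ h => h) (fun _ h => h)
        rw [Multiset.countP_cons, h2] at h1
        by_contra haU
        simp [haU] at h1
        omega
      -- now count with V = U ∪ X 0 for some fixed a0
      obtain ⟨a0, ha0⟩ := hX 0
      obtain ⟨b, hb, hbm⟩ := (sec_iff X (a0 ::ₘ m)).mp (h a0 ha0)
      obtain ⟨V, hV⟩ : ∃ V : Set N, V = U ∪ X 0 := ⟨_, rfl⟩
      have h1 : s.card + 1 ≤ Multiset.countP (· ∈ V) (a0 ::ₘ m) := by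
        rw [← hbm, countP_ofFn]
        have hsub : insert (0 : Fin (n+1)) (s.map ⟨Fin.succ, Fin.succ_injective n⟩) ⊆
            Finset.univ.filter (fun i => b i ∈ V) := by
          intro i hi
          simp only [Finset.mem_insert, Finset.mem_map, Function.Embedding.coeFn_mk] at hi
          simp only [Finset.mem_filter, Finset.mem_univ, true_and]
          rw [hV]
          rcases hi with rfl | ⟨j, hj, rfl⟩
          · exact Or.inr (hb 0)
          · exact Or.inl (Set.mem_biUnion hj (hb j.succ))
        have hnot : (0 : Fin (n+1)) ∉ s.map ⟨Fin.succ, Fin.succ_injective n⟩ := by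
          simp only [Finset.mem_map, Function.Embedding.coeFn_mk]
          rintro ⟨j, -, hj⟩
          exact (Fin.succ_ne_zero j) hj
        calc s.card + 1 = (insert (0 : Fin (n+1)) (s.map ⟨Fin.succ, Fin.succ_injective n⟩)).card := by
              rw [Finset.card_insert_of_notMem hnot, Finset.card_map]
          _ ≤ _ := Finset.card_le_card hsub
      have h2 : Multiset.countP (· ∈ V) m = B.card := by
        refine hcntm V (fun p hp => by rw [hV]; exact Or.inl hp) ?_
        intro p hp
        rw [hV] at hp
        rcases hp with hp | hp
        · exact hp
        · exact hA _ hp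
      have h3 : Multiset.countP (· ∈ V) (a0 ::ₘ m) ≤ Multiset.countP (· ∈ V) m + 1 := by
        rw [Multiset.countP_cons]
        split <;> omega
      omega
    obtain ⟨f, hfinj, hf⟩ := (Finset.all_card_le_biUnion_card_iff_exists_injective t).mp hall
    have hfbij : Function.Bijective f := Finite.injective_iff_bijective.mp hfinj
    refine (sec_iff _ m).mpr ⟨g ∘ f, ?_, ?_⟩
    · intro i
      have := hf i
      simp only [ht, Finset.mem_filter] at this
      exact this.2
    · have : (g ∘ f) = g ∘ (Equiv.ofBijective f hfbij) := rfl
      rw [this, ofFn_comp_perm, hg]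
  · intro hmem a ha
    obtain ⟨c, hc, hcm⟩ := (sec_iff _ m).mp hmem
    refine (sec_iff X _).mpr ⟨Fin.cons a c, ?_, ?_⟩
    · intro i
      refine Fin.cases ?_ ?_ i
      · simpa using ha
      · intro j
        simpa using hc j
    · rw [List.ofFn_succ]
      simp only [Fin.cons_zero, Fin.cons_succ]
      rw [← Multiset.cons_coe, hcm]
end

section
/- For n-tuples X, Y of nonempty subsets of N: Sec(X) = Sec(Y) if and only if there exists a permutation σ ∈ S_n with X_{σ(i)} = Y_i for all i. -/
open scoped Classical

/-! ### Auxiliary lemmas -/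

lemma ofFn_multiset_map {α : Type*} {n : ℕ} (f : Fin n → α) :
    (List.ofFn f : Multiset α) = Multiset.map f (Finset.univ : Finset (Fin n)).val := by
  simp [List.ofFn_eq_map]

lemma card_filter_ofFn {α : Type*} {n : ℕ} (a : Fin n → α) (p : α → Prop) [DecidablePred p] :
    Multiset.card ((List.ofFn a : Multiset α).filter p)
      = (Finset.univ.filter (fun i => p (a i))).card := by
  rw [ofFn_multiset_map, ← Multiset.countP_eq_card_filter, Multiset.countP_map]
  rfl

/-- From equality of `ofFn` multisets, extract a permutation of indices. -/
lemma exists_perm_of_ofFn_eq {α : Type*} : ∀ {n : ℕ} (f g : Fin n → α),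
    (List.ofFn f : Multiset α) = (List.ofFn g : Multiset α) →
    ∃ σ : Equiv.Perm (Fin n), ∀ i, f (σ i) = g i := by
  intro n
  induction n with
  | zero => intro f g _; exact ⟨1, fun i => i.elim0⟩
  | succ n ih =>
    intro f g h
    have hg0 : g 0 ∈ (List.ofFn f : Multiset α) := by
      rw [h]
      have : g 0 ∈ List.ofFn g := by rw [List.mem_ofFn]; exact ⟨0, rfl⟩
      exact this
    obtain ⟨j, hj⟩ : ∃ j, f j = g 0 := by
      have : g 0 ∈ List.ofFn f := hg0
      rwa [List.mem_ofFn] at this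
    set τ : Equiv.Perm (Fin (n+1)) := Equiv.swap 0 j with hτ
    have hperm : (List.ofFn (f ∘ τ) : Multiset α) = (List.ofFn f : Multiset α) :=
      Quot.sound (Equiv.Perm.ofFn_comp_perm τ f)
    have h0 : (f ∘ τ) 0 = g 0 := by simp [hτ, hj]
    have hcons : ∀ (u : Fin (n+1) → α),
        (List.ofFn u : Multiset α) = u 0 ::ₘ (List.ofFn (u ∘ Fin.succ) : Multiset α) := by
      intro u; rw [List.ofFn_succ]; rfl
    have h2 : (List.ofFn ((f ∘ τ) ∘ Fin.succ) : Multiset α)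
        = (List.ofFn (g ∘ Fin.succ) : Multiset α) := by
      have := (hcons (f ∘ τ)).symm.trans ((hperm.trans h).trans (hcons g))
      rw [h0] at this
      exact (Multiset.cons_inj_right _).mp this
    obtain ⟨σ', hσ'⟩ := ih _ _ h2
    refine ⟨(Equiv.Perm.decomposeFin.symm (0, σ')).trans τ, ?_⟩
    intro i
    induction i using Fin.cases with
    | zero => simpa using h0
    | succ i =>
      have : (Equiv.Perm.decomposeFin.symm (0, σ')) i.succ = (σ' i).succ := by
        simp [Equiv.Perm.decomposeFin_symm_apply_succ]
      simp only [Equiv.trans_apply, this]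
      exact hσ' i

/-- Number of members of `s` disjoint from the finite set `S`. -/
noncomputable def cdis {N : Type*} (s : Multiset (Set N)) (S : Finset N) : ℕ :=
  Multiset.card (s.filter (fun A => ∀ x ∈ S, x ∉ A))

/-- A multiset of nonempty sets is determined by its disjointness counts. -/
lemma multiset_eq_of_cdis {N : Type*} : ∀ (k : ℕ) (sx sy : Multiset (Set N)),
    Multiset.card sx = k →
    (∀ A ∈ sx + sy, A.Nonempty) →
    (∀ S : Finset N, cdis sx S = cdis sy S) →
    sx = sy := by
  intro k
  induction k with
  | zero =>
    intro sx sy hc _ h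
    have h0 := h ∅
    have hx : sx = 0 := Multiset.card_eq_zero.mp hc
    subst hx
    rw [cdis, cdis, Multiset.filter_eq_self.mpr (by simp),
      Multiset.filter_eq_self.mpr (by simp)] at h0
    simp at h0
    exact (Multiset.card_eq_zero.mp h0.symm).symm
  | succ k ih =>
    intro sx sy hc hne h
    set F : Finset (Set N) := (sx + sy).toFinset with hF
    have hFne : F.Nonempty := by
      have : sx ≠ 0 := by intro h0; rw [h0] at hc; simp at hc
      obtain ⟨A, hA⟩ := Multiset.exists_mem_of_ne_zero this
      exact ⟨A, by simp [hF, hA]⟩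
    obtain ⟨A, hAF, hAmin⟩ : ∃ A ∈ F, ∀ B ∈ F, ¬ B < A := by
      obtain ⟨A, hA⟩ := Finset.exists_minimal hFne
      exact ⟨A, hA.1, fun B hB hlt => hA.not_lt hB hlt⟩
    have hpt : ∀ B ∈ F.erase A, ∃ x, x ∈ B ∧ x ∉ A := by
      intro B hB
      obtain ⟨hBA, hBF⟩ := Finset.mem_erase.mp hB
      by_contra hcon
      push_neg at hcon
      have hBsub : B ⊆ A := fun x hx => by
        by_contra hxA; exact hxA (by by_contra hh; exact hh (hcon x hx))
      have : B < A := lt_of_le_of_ne hBsub hBA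
      exact hAmin B hBF this
    set S : Finset N := (F.erase A).attach.image (fun B => (hpt B.1 B.2).choose) with hS
    have hSA : ∀ x ∈ S, x ∉ A := by
      intro x hx
      obtain ⟨B, _, rfl⟩ := Finset.mem_image.mp hx
      exact (hpt B.1 B.2).choose_spec.2
    have hShit : ∀ B ∈ F, B ≠ A → ∃ x ∈ S, x ∈ B := by
      intro B hBF hBA
      have hB : B ∈ F.erase A := Finset.mem_erase.mpr ⟨hBA, hBF⟩
      refine ⟨(hpt B hB).choose, ?_, (hpt B hB).choose_spec.1⟩
      exact Finset.mem_image.mpr ⟨⟨B, hB⟩, Finset.mem_attach _ _, rfl⟩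
    have key : ∀ (s : Multiset (Set N)), s ≤ sx + sy →
        s.filter (fun B => ∀ x ∈ S, x ∉ B) = s.filter (fun B => B = A) := by
      intro s hs
      apply Multiset.filter_congr
      intro B hB
      have hBF : B ∈ F := by
        rw [hF, Multiset.mem_toFinset]
        exact Multiset.mem_of_le hs hB
      constructor
      · intro hdisj
        by_contra hBA
        obtain ⟨x, hxS, hxB⟩ := hShit B hBF hBA
        exact hdisj x hxS hxB
      · rintro rfl; exact hSA
    have hcount : sx.count A = sy.count A := by
      have hx := h S
      rw [cdis, cdis, key sx (Multiset.le_add_right _ _), key sy (Multiset.le_add_left _ _)] at hx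
      simpa [Multiset.count_eq_card_filter_eq, eq_comm] using hx
    have hAxy : A ∈ sx ∧ A ∈ sy := by
      have hAm : A ∈ sx + sy := by simpa [hF] using hAF
      rw [Multiset.mem_add] at hAm
      rw [← Multiset.count_pos, ← Multiset.count_pos]
      rcases hAm with h1 | h1
      · exact ⟨Multiset.count_pos.mpr h1, hcount ▸ Multiset.count_pos.mpr h1⟩
      · exact ⟨hcount ▸ Multiset.count_pos.mpr h1, Multiset.count_pos.mpr h1⟩
    have hxc : sx = A ::ₘ sx.erase A := (Multiset.cons_erase hAxy.1).symm
    have hyc : sy = A ::ₘ sy.erase A := (Multiset.cons_erase hAxy.2).symm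
    have hcard' : Multiset.card (sx.erase A) = k := by
      have := congrArg Multiset.card hxc
      simp at this
      omega
    have hne' : ∀ B ∈ sx.erase A + sy.erase A, B.Nonempty := by
      intro B hB
      rw [Multiset.mem_add] at hB
      apply hne
      rw [Multiset.mem_add]
      rcases hB with h1 | h1
      · exact Or.inl (Multiset.mem_of_le (Multiset.erase_le _ _) h1)
      · exact Or.inr (Multiset.mem_of_le (Multiset.erase_le _ _) h1)
    have h' : ∀ S' : Finset N, cdis (sx.erase A) S' = cdis (sy.erase A) S' := by
      intro S'
      have hx := h S'
      rw [cdis, cdis] at hx ⊢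
      rw [hxc, hyc] at hx
      by_cases hp : ∀ x ∈ S', x ∉ A
      · rw [Multiset.filter_cons_of_pos _ hp, Multiset.filter_cons_of_pos _ hp] at hx
        simpa using hx
      · rw [Multiset.filter_cons_of_neg _ hp, Multiset.filter_cons_of_neg _ hp] at hx
        exact hx
    have := ih (sx.erase A) (sy.erase A) hcard' hne' h'
    rw [hxc, hyc, this]

/-- Number of indices whose set meets `S`. -/
noncomputable def cmeet {N : Type*} {n : ℕ} (X : Fin n → Set N) (S : Finset N) : ℕ :=
  (Finset.univ.filter (fun i => ∃ x ∈ S, x ∈ X i)).card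

set_option maxHeartbeats 1000000 in
lemma le_cmeet {N : Type*} {n : ℕ} (X : Fin n → Set N) (S : Finset N)
    (m : Multiset N) (hm : m ∈ Sec X) :
    Multiset.card (m.filter (fun x => x ∈ S)) ≤ cmeet X S := by
  obtain ⟨a, σ, ha, rfl⟩ := hm
  rw [card_filter_ofFn]
  calc (Finset.univ.filter (fun i => a i ∈ S)).card
      ≤ (Finset.univ.filter (fun i => ∃ x ∈ S, x ∈ X (σ i))).card := by
        apply Finset.card_le_card
        intro i hi
        simp only [Finset.mem_filter] at hi ⊢
        exact ⟨hi.1, a i, hi.2, ha i⟩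
    _ = cmeet X S := by
        rw [cmeet]
        apply Finset.card_equiv σ
        intro i
        simp

lemma achieve_cmeet {N : Type*} {n : ℕ} (X : Fin n → Set N) (hX : ∀ i, (X i).Nonempty)
    (S : Finset N) :
    ∃ m ∈ Sec X, Multiset.card (m.filter (fun x => x ∈ S)) = cmeet X S := by
  have hsel : ∀ i : Fin n, ∃ x, x ∈ X i ∧ (x ∈ S ↔ ∃ y ∈ S, y ∈ X i) := by
    intro i
    by_cases h : ∃ y ∈ S, y ∈ X i
    · obtain ⟨y, hyS, hyX⟩ := h
      exact ⟨y, hyX, by simp [hyS]; exact ⟨y, hyS, hyX⟩⟩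
    · obtain ⟨x, hx⟩ := hX i
      refine ⟨x, hx, ?_⟩
      simp only [h, iff_false]
      intro hxS
      exact h ⟨x, hxS, hx⟩
  choose a haX haS using hsel
  refine ⟨(List.ofFn a : Multiset N), ⟨a, 1, by simpa using haX, rfl⟩, ?_⟩
  rw [card_filter_ofFn, cmeet]
  congr 1
  apply Finset.filter_congr
  intro i _
  simpa using haS i

lemma cmeet_eq {N : Type*} {n : ℕ} (X Y : Fin n → Set N)
    (hX : ∀ i, (X i).Nonempty) (hY : ∀ i, (Y i).Nonempty)
    (h : Sec X = Sec Y) (S : Finset N) : cmeet X S = cmeet Y S := by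
  apply le_antisymm
  · obtain ⟨m, hm, hcard⟩ := achieve_cmeet X hX S
    rw [← hcard]
    exact le_cmeet Y S m (h ▸ hm)
  · obtain ⟨m, hm, hcard⟩ := achieve_cmeet Y hY S
    rw [← hcard]
    exact le_cmeet X S m (h.symm ▸ hm)

lemma cdis_ofFn {N : Type*} {n : ℕ} (X : Fin n → Set N) (S : Finset N) :
    cdis (List.ofFn X : Multiset (Set N)) S
      = (Finset.univ.filter (fun i => ∀ x ∈ S, x ∉ X i)).card := by
  rw [cdis, card_filter_ofFn]

lemma sec_subset {N : Type*} {n : ℕ} (X Y : Fin n → Set N)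
    (σ : Equiv.Perm (Fin n)) (hσ : ∀ i, X (σ i) = Y i) : Sec X ⊆ Sec Y := by
  rintro m ⟨a, τ, ha, rfl⟩
  refine ⟨a, τ.trans σ.symm, fun i => ?_, rfl⟩
  have : Y (σ.symm (τ i)) = X (σ (σ.symm (τ i))) := (hσ (σ.symm (τ i))).symm
  simp only [Equiv.trans_apply]
  rw [this, Equiv.apply_symm_apply]
  exact ha i

theorem stmt3 {N : Type*} {n : ℕ} (X Y : Fin n → Set N)
    (hX : ∀ i, (X i).Nonempty) (hY : ∀ i, (Y i).Nonempty) :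
    Sec X = Sec Y ↔ ∃ σ : Equiv.Perm (Fin n), ∀ i, X (σ i) = Y i := by
  constructor
  · intro h
    -- disjointness counts of the two tuples agree
    have hd : ∀ S : Finset N, cdis (List.ofFn X : Multiset (Set N)) S
        = cdis (List.ofFn Y : Multiset (Set N)) S := by
      intro S
      rw [cdis_ofFn, cdis_ofFn]
      have hm := cmeet_eq X Y hX hY h S
      have hXc := Finset.card_filter_add_card_filter_not
        (s := (Finset.univ : Finset (Fin n))) (p := fun i => ∃ x ∈ S, x ∈ X i)
      have hYc := Finset.card_filter_add_card_filter_not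
        (s := (Finset.univ : Finset (Fin n))) (p := fun i => ∃ x ∈ S, x ∈ Y i)
      have hXe : (Finset.univ.filter (fun i => ¬ ∃ x ∈ S, x ∈ X i))
          = (Finset.univ.filter (fun i => ∀ x ∈ S, x ∉ X i)) := by
        apply Finset.filter_congr; intro i _; push_neg; rfl
      have hYe : (Finset.univ.filter (fun i => ¬ ∃ x ∈ S, x ∈ Y i))
          = (Finset.univ.filter (fun i => ∀ x ∈ S, x ∉ Y i)) := by
        apply Finset.filter_congr; intro i _; push_neg; rfl
      rw [hXe] at hXc
      rw [hYe] at hYc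
      rw [cmeet, cmeet] at hm
      omega
    have hne : ∀ A ∈ (List.ofFn X : Multiset (Set N)) + (List.ofFn Y : Multiset (Set N)),
        A.Nonempty := by
      intro A hA
      rw [Multiset.mem_add] at hA
      rcases hA with hA | hA
      · obtain ⟨i, rfl⟩ := List.mem_ofFn.mp hA
        exact hX i
      · obtain ⟨i, rfl⟩ := List.mem_ofFn.mp hA
        exact hY i
    have heq : (List.ofFn X : Multiset (Set N)) = (List.ofFn Y : Multiset (Set N)) :=
      multiset_eq_of_cdis n _ _ (by simp) hne hd
    exact exists_perm_of_ofFn_eq X Y heq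
  · rintro ⟨σ, hσ⟩
    apply Set.Subset.antisymm (sec_subset X Y σ hσ)
    apply sec_subset Y X σ.symm
    intro i
    rw [← hσ (σ.symm i), Equiv.apply_symm_apply]
end

section
/- If (Z, X_2, …, X_n) and (Z, Y_2, …, Y_n) are n-tuples of nonempty subsets of N with the same set of unordered sections, then (X_2,…,X_n) and (Y_2,…,Y_n) have the same set of unordered sections. -/
open scoped Classical

/-- A permutation of lists gives an equivalence of index types matching values. -/
theorem perm_exists_get_equiv {α : Type*} {l₁ l₂ : List α} (h : l₁.Perm l₂) :
    ∃ σ : Fin l₁.length ≃ Fin l₂.length, ∀ i, l₁.get i = l₂.get (σ i) := by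
  induction h with
  | nil => exact ⟨Equiv.refl _, fun i => i.elim0⟩
  | cons x h ih =>
    obtain ⟨σ, hσ⟩ := ih
    refine ⟨(finSuccEquiv _).trans ((σ.optionCongr).trans (finSuccEquiv _).symm), fun i => ?_⟩
    refine Fin.cases ?_ (fun j => ?_) i
    · simp
    · simpa using hσ j
  | swap x y l =>
    refine ⟨Equiv.swap ⟨0, by simp⟩ ⟨1, by simp⟩, fun i => ?_⟩
    rcases i with ⟨iv, hi⟩
    match iv, hi with
    | 0, hi => simp [Equiv.swap_apply_def, Fin.ext_iff]
    | 1, hi => simp [Equiv.swap_apply_def, Fin.ext_iff]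
    | (k+2), hi => simp [Equiv.swap_apply_def, Fin.ext_iff]
  | trans h₁ h₂ ih₁ ih₂ =>
    obtain ⟨σ₁, hσ₁⟩ := ih₁
    obtain ⟨σ₂, hσ₂⟩ := ih₂
    exact ⟨σ₁.trans σ₂, fun i => (hσ₁ i).trans (hσ₂ (σ₁ i))⟩

theorem exists_comp_perm {α : Type*} {k : ℕ} (b c : Fin k → α)
    (h : (List.ofFn b : Multiset α) = (List.ofFn c : Multiset α)) :
    ∃ π : Equiv.Perm (Fin k), ∀ i, b i = c (π i) := by
  obtain ⟨σ, hσ⟩ := perm_exists_get_equiv (Multiset.coe_eq_coe.mp h)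
  refine ⟨(finCongr (List.length_ofFn (f := b)).symm).trans
    (σ.trans (finCongr (List.length_ofFn (f := c)))), fun i => ?_⟩
  have := hσ (Fin.cast (List.length_ofFn (f := b)).symm i)
  rw [List.get_ofFn, List.get_ofFn] at this
  simpa using this


theorem mem_sec_listing {N : Type*} {n : ℕ} (X : Fin n → Set N) (a : Fin n → N)
    (h : ((List.ofFn a : List N) : Multiset N) ∈ Sec X) :
    ∃ τ : Equiv.Perm (Fin n), ∀ i, a i ∈ X (τ i) := by
  obtain ⟨b, σ, hb, hm⟩ := h
  obtain ⟨π, hπ⟩ := exists_comp_perm a b hm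
  exact ⟨π.trans σ, fun i => (hπ i) ▸ hb (π i)⟩

theorem matches_of_hall {N : Type*} {n : ℕ} (Y : Fin n → Set N) (a : Fin n → N)
    (h : ∀ s : Finset (Fin n), s.card ≤
      (s.biUnion fun i => Finset.univ.filter fun j => a i ∈ Y j).card) :
    ∃ τ : Equiv.Perm (Fin n), ∀ i, a i ∈ Y (τ i) := by
  obtain ⟨f, hfinj, hf⟩ :=
    (Finset.all_card_le_biUnion_card_iff_exists_injective
      (fun i => Finset.univ.filter fun j => a i ∈ Y j)).mp h
  refine ⟨Equiv.ofBijective f ((Finite.injective_iff_bijective).mp hfinj), fun i => ?_⟩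
  have := hf i
  simp only [Finset.mem_filter] at this
  exact this.2

theorem sec_subset_of_cons {N : Type*} {n : ℕ} {Z : Set N} {X Y : Fin n → Set N}
    (hZ : Z.Nonempty) (h : Sec (Fin.cons Z X) ⊆ Sec (Fin.cons Z Y)) :
    Sec X ⊆ Sec Y := by
  intro m hm
  obtain ⟨a, σ, ha, rfl⟩ := hm
  set b : Fin n → N := a ∘ σ.symm with hbdef
  have hbX : ∀ i, b i ∈ X i := by
    intro i
    simpa [hbdef] using ha (σ.symm i)
  have hmb : (List.ofFn a : Multiset N) = (List.ofFn b : Multiset N) :=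
    (Multiset.coe_eq_coe.mpr (Equiv.Perm.ofFn_comp_perm σ.symm a)).symm
  rw [hmb]
  suffices hsuff : ∃ τ : Equiv.Perm (Fin n), ∀ i, b i ∈ Y (τ i) by
    obtain ⟨τ, hτ⟩ := hsuff
    exact ⟨b, τ, hτ, rfl⟩
  by_contra hcon
  obtain ⟨s, hs⟩ : ∃ s : Finset (Fin n),
      (s.biUnion fun i => Finset.univ.filter fun j => b i ∈ Y j).card < s.card := by
    by_contra hall
    push_neg at hall
    exact hcon (matches_of_hall Y b hall)
  set t : Fin n → Finset (Fin n) := fun i => Finset.univ.filter fun j => b i ∈ Y j with ht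
  set B : Finset (Fin n) := s.biUnion t with hB
  have hsec : ∀ z ∈ Z, ((List.ofFn (Fin.cons z b) : List N) : Multiset N) ∈
      Sec (Fin.cons Z Y) := by
    intro z hz
    apply h
    refine ⟨Fin.cons z b, 1, fun k => ?_, rfl⟩
    refine Fin.cases ?_ (fun i => ?_) k
    · simpa using hz
    · simpa using hbX i
  obtain ⟨z₀, hz₀⟩ := hZ
  obtain ⟨τ₁, hτ₁⟩ := mem_sec_listing _ _ (hsec z₀ hz₀)
  have hex : ∃ i ∈ s, τ₁ i.succ = 0 := by
    by_contra hno
    push_neg at hno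
    have hsub : s.image (fun i => τ₁ i.succ) ⊆ B.image Fin.succ := by
      intro k hk
      obtain ⟨i, hi, rfl⟩ := Finset.mem_image.mp hk
      obtain ⟨j, hj⟩ := Fin.eq_succ_of_ne_zero (hno i hi)
      have hmem := hτ₁ i.succ
      rw [hj] at hmem
      simp only [Fin.cons_succ] at hmem
      refine Finset.mem_image.mpr ⟨j, Finset.mem_biUnion.mpr ⟨i, hi, ?_⟩, hj.symm⟩
      simp [ht, hmem]
    have hinj : Function.Injective (fun i : Fin n => τ₁ i.succ) :=
      fun i j hij => Fin.succ_injective n (τ₁.injective hij)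
    have hc1 : s.card ≤ B.card := by
      calc s.card = (s.image fun i => τ₁ i.succ).card :=
            (Finset.card_image_of_injective s hinj).symm
        _ ≤ (B.image Fin.succ).card := Finset.card_le_card hsub
        _ = B.card := Finset.card_image_of_injective _ (Fin.succ_injective n)
    omega
  obtain ⟨i₀, hi₀s, hi₀⟩ := hex
  have hzi : b i₀ ∈ Z := by
    have := hτ₁ i₀.succ
    rw [hi₀] at this
    simpa using this
  obtain ⟨τ₂, hτ₂⟩ := mem_sec_listing _ _ (hsec (b i₀) hzi)
  set s' : Finset (Fin (n + 1)) := insert 0 (s.image Fin.succ) with hs'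
  have hcard' : s'.card = s.card + 1 := by
    rw [hs', Finset.card_insert_of_notMem, Finset.card_image_of_injective _ (Fin.succ_injective n)]
    simp [Fin.succ_ne_zero, eq_comm]
  have hsub2 : s'.image τ₂ ⊆ insert 0 (B.image Fin.succ) := by
    intro k hk
    obtain ⟨k', hk', rfl⟩ := Finset.mem_image.mp hk
    by_cases h0 : τ₂ k' = 0
    · simp [h0]
    · obtain ⟨j, hj⟩ := Fin.eq_succ_of_ne_zero h0
      have hmem := hτ₂ k'
      rw [hj] at hmem
      have hexij : ∃ i ∈ s, b i ∈ Y j := by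
        rcases Finset.mem_insert.mp hk' with h0' | himg
        · subst h0'
          simp only [Fin.cons_zero, Fin.cons_succ] at hmem
          exact ⟨i₀, hi₀s, hmem⟩
        · obtain ⟨i, hi, rfl⟩ := Finset.mem_image.mp himg
          simp only [Fin.cons_succ] at hmem
          exact ⟨i, hi, hmem⟩
      obtain ⟨i, hi, hbY⟩ := hexij
      rw [hj]
      refine Finset.mem_insert_of_mem (Finset.mem_image.mpr
        ⟨j, Finset.mem_biUnion.mpr ⟨i, hi, ?_⟩, rfl⟩)
      simp [ht, hbY]
  have hfinal : s.card + 1 ≤ B.card + 1 := by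
    calc s.card + 1 = s'.card := hcard'.symm
      _ = (s'.image τ₂).card := (Finset.card_image_of_injective _ τ₂.injective).symm
      _ ≤ (insert 0 (B.image Fin.succ)).card := Finset.card_le_card hsub2
      _ ≤ (B.image Fin.succ).card + 1 := Finset.card_insert_le _ _
      _ = B.card + 1 := by rw [Finset.card_image_of_injective _ (Fin.succ_injective n)]
  omega

theorem stmt4 {N : Type*} {n : ℕ} (Z : Set N) (X Y : Fin n → Set N)
    (hZ : Z.Nonempty) (hX : ∀ i, (X i).Nonempty) (hY : ∀ i, (Y i).Nonempty)
    (h : Sec (Fin.cons Z X) = Sec (Fin.cons Z Y)) :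
    Sec X = Sec Y :=
  Set.Subset.antisymm (sec_subset_of_cons hZ h.le) (sec_subset_of_cons hZ h.ge)
end

section
/- Let X, Y be n-tuples of nonempty subsets of N satisfying: (1) a ↦ χ_Y(a) is a bijection from N to B^n ∖ {0…0}; (2) the induced function f sending χ_Y(a) to χ_X(a) is increasing. Then Sec(X) ⊆ Sec(Y) if and only if |χ_X(a)| ≤ |χ_Y(a)| for all a ∈ N. -/
open scoped Classical

private lemma count_ofFn_aux {N : Type*} {n : ℕ} (c : Fin n → N) (a : N) :
    Multiset.count a (List.ofFn c : Multiset N) = (Finset.univ.filter fun i => c i = a).card := by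
  rw [List.ofFn_eq_map, ← Multiset.map_coe, Multiset.count_map]
  rw [Finset.card, Finset.filter_val, Fin.univ_def]
  congr 1
  exact Multiset.filter_congr (fun x _ => by constructor <;> (intro h; exact h.symm))

private lemma wt_chi_eq {N : Type*} {n : ℕ} (Z : Fin n → Set N) (a : N) :
    wt (chi Z a) = (Finset.univ.filter fun i => a ∈ Z i).card := by
  unfold wt chi
  congr 1
  exact Finset.filter_congr (fun i _ => by simp)

theorem stmt6 {N : Type*} {n : ℕ} (X Y : Fin n → Set N)
    (hX : ∀ i, (X i).Nonempty) (hY : ∀ i, (Y i).Nonempty)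
    (h1inj : Function.Injective (chi Y))
    (h1surj : ∀ u : Fin n → Bool, u ≠ (fun _ => false) → ∃ a : N, chi Y a = u)
    (h1ne : ∀ a : N, chi Y a ≠ (fun _ => false))
    (h2 : ∀ a b : N, chi Y a ≤ chi Y b → chi X a ≤ chi X b) :
    Sec X ⊆ Sec Y ↔ ∀ a : N, wt (chi X a) ≤ wt (chi Y a) := by
  constructor
  · -- forward direction
    intro hsub a
    have hc : ∀ i, ∃ x, x ∈ X i ∧ (a ∈ X i → x = a) := by
      intro i
      by_cases h : a ∈ X i
      · exact ⟨a, h, fun _ => rfl⟩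
      · exact ⟨(hX i).choose, (hX i).choose_spec, fun h' => absurd h' h⟩
    choose c hcX hca using hc
    have hmX : (List.ofFn c : Multiset N) ∈ Sec X :=
      ⟨c, Equiv.refl _, fun i => hcX i, rfl⟩
    obtain ⟨d, τ, hd, hm⟩ := hsub hmX
    rw [wt_chi_eq]
    have h1 : (Finset.univ.filter fun i => a ∈ X i).card ≤
        (Finset.univ.filter fun i => c i = a).card := by
      apply Finset.card_le_card
      intro i hi
      simp only [Finset.mem_filter, Finset.mem_univ, true_and] at hi ⊢
      exact hca i hi
    have h2' : (Finset.univ.filter fun i => c i = a).card =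
        (Finset.univ.filter fun i => d i = a).card := by
      rw [← count_ofFn_aux, ← count_ofFn_aux, ← hm]
    have h3 : (Finset.univ.filter fun i => d i = a).card ≤
        (Finset.univ.filter fun j => a ∈ Y j).card := by
      apply Finset.card_le_card_of_injOn τ
      · intro i hi
        simp only [Finset.mem_coe, Finset.mem_filter, Finset.mem_univ, true_and] at hi ⊢
        rw [← hi]; exact hd i
      · exact τ.injective.injOn
    rw [wt_chi_eq Y a]
    omega
  · -- backward direction (Hall)
    intro hw m hm
    obtain ⟨c, σ, hcX, rfl⟩ := hm
    have hall : ∀ s : Finset (Fin n),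
        s.card ≤ (s.biUnion fun i => Finset.univ.filter fun j => c i ∈ Y j).card := by
      intro s
      rcases s.eq_empty_or_nonempty with rfl | ⟨i0, hi0⟩
      · simp
      set T := s.biUnion fun i => Finset.univ.filter fun j => c i ∈ Y j with hT
      have hune : (fun j => decide (j ∈ T)) ≠ (fun _ : Fin n => false) := by
        obtain ⟨j0, hj0⟩ : ∃ j, chi Y (c i0) j = true := by
          by_contra h
          push_neg at h
          apply h1ne (c i0)
          funext j
          exact Bool.eq_false_iff.mpr (h j)
        have hj0T : j0 ∈ T := by
          rw [hT]
          refine Finset.mem_biUnion.mpr ⟨i0, hi0, ?_⟩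
          simp only [Finset.mem_filter, Finset.mem_univ, true_and]
          exact of_decide_eq_true hj0
        intro h
        have := congrFun h j0
        simp only [decide_eq_false_iff_not] at this
        exact this hj0T
      obtain ⟨b, hb⟩ := h1surj _ hune
      have hle : ∀ i ∈ s, chi X (c i) ≤ chi X b := by
        intro i hi
        apply h2
        rw [hb]
        intro j
        show chi Y (c i) j ≤ decide (j ∈ T)
        by_cases hj : chi Y (c i) j = true
        · have hjT : j ∈ T := by
            rw [hT]
            refine Finset.mem_biUnion.mpr ⟨i, hi, ?_⟩
            simp only [Finset.mem_filter, Finset.mem_univ, true_and]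
            exact of_decide_eq_true hj
          rw [hj, decide_eq_true hjT]

        · rw [Bool.eq_false_iff.mpr hj]
          exact Bool.false_le _
      have hcard : s.card ≤ wt (chi X b) := by
        apply Finset.card_le_card_of_injOn σ
        · intro i hi
          simp only [wt, Finset.mem_coe, Finset.mem_filter, Finset.mem_univ, true_and]
          have hXi : chi X (c i) (σ i) = true := decide_eq_true (hcX i)
          have := hle i hi (σ i)
          rw [hXi] at this
          exact le_antisymm (Bool.le_true _) this
        · exact σ.injective.injOn
      have hTcard : wt (chi Y b) = T.card := by
        unfold wt
        congr 1
        ext j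
        simp [hb]
      have := hw b
      omega
    obtain ⟨f, hfinj, hf⟩ :=
      (Finset.all_card_le_biUnion_card_iff_exists_injective _).mp hall
    refine ⟨c, Equiv.ofBijective f (Finite.injective_iff_bijective.mp hfinj), fun i => ?_, rfl⟩
    have := hf i
    simp only [Finset.mem_filter, Finset.mem_univ, true_and] at this
    exact this
end

section
/- For n-tuples X, Y of nonempty subsets of N: Sec(X) ⊆ Sec(Y) if and only if there exists an increasing function f : B^n → B^n with |f(u)| ≤ |u| for all u such that X_i ⊆ (f̂(Y))_i for all i. -/
open scoped Classical

private lemma bool_of_true_le {b : Bool} (h : true ≤ b) : b = true := by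
  cases b
  · exact absurd h (by decide)
  · rfl

private lemma ofFn_eq_map_univ {N : Type*} {n : ℕ} (b : Fin n → N) :
    (List.ofFn b : Multiset N) = Multiset.map b (Finset.univ.val) := by
  rw [List.ofFn_eq_map]
  rfl

theorem stmt7 {N : Type*} {n : ℕ} (X Y : Fin n → Set N)
    (hX : ∀ i, (X i).Nonempty) (hY : ∀ i, (Y i).Nonempty) :
    Sec X ⊆ Sec Y ↔
      ∃ f : (Fin n → Bool) → (Fin n → Bool),
        Monotone f ∧ (∀ u, wt (f u) ≤ wt u) ∧ ∀ i, X i ⊆ liftFn f Y i := by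
  constructor
  · -- forward direction
    intro hsec
    refine ⟨fun u i => decide (∃ a ∈ X i, chi Y a ≤ u), ?_, ?_, ?_⟩
    · -- Monotone
      intro u v huv i
      show (decide (∃ a ∈ X i, chi Y a ≤ u) : Bool) ≤ decide (∃ a ∈ X i, chi Y a ≤ v)
      by_cases h : (∃ a ∈ X i, chi Y a ≤ u)
      · obtain ⟨a, ha, hle⟩ := h
        have h2 : (∃ a ∈ X i, chi Y a ≤ v) := ⟨a, ha, hle.trans huv⟩
        rw [decide_eq_true h2]
        exact Bool.le_true _
      · rw [decide_eq_false h]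
        exact Bool.false_le _
    · -- contractive
      intro u
      have hchoice : ∀ i, ∃ x, x ∈ X i ∧
          ((decide (∃ a ∈ X i, chi Y a ≤ u) : Bool) = true → chi Y x ≤ u) := by
        intro i
        by_cases h : (∃ a ∈ X i, chi Y a ≤ u)
        · obtain ⟨x, hx, hle⟩ := h
          exact ⟨x, hx, fun _ => hle⟩
        · obtain ⟨x, hx⟩ := hX i
          exact ⟨x, hx, fun hc => absurd (of_decide_eq_true hc) h⟩
      choose a haX hau using hchoice
      have hmem : (List.ofFn a : Multiset N) ∈ Sec X :=
        ⟨a, Equiv.refl _, fun i => haX i, rfl⟩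
      obtain ⟨c, τ, hc, hm⟩ := hsec hmem
      set p : N → Prop := fun x => chi Y x ≤ u with hp
      have hcount : ((List.ofFn a : Multiset N).countP p) = ((List.ofFn c : Multiset N).countP p) := by
        rw [hm]
      rw [ofFn_eq_map_univ, ofFn_eq_map_univ, Multiset.countP_map, Multiset.countP_map] at hcount
      have hcount' : (Finset.univ.filter fun i => p (a i)).card
          = (Finset.univ.filter fun j => p (c j)).card := hcount
      -- lower bound
      have hlow : wt (fun i => decide (∃ a ∈ X i, chi Y a ≤ u))
          ≤ (Finset.univ.filter fun i => p (a i)).card := by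
        apply Finset.card_le_card
        intro i hi
        simp only [Finset.mem_filter, Finset.mem_univ, true_and] at hi ⊢
        exact hau i hi
      -- upper bound
      have hup : (Finset.univ.filter fun j => p (c j)).card ≤ wt u := by
        apply Finset.card_le_card_of_injOn τ
        · intro j hj
          simp only [Finset.mem_coe, Finset.mem_filter, Finset.mem_univ, true_and] at hj ⊢
          have h1 : chi Y (c j) (τ j) = true := decide_eq_true (hc j)
          have h2 := hj (τ j)
          rw [h1] at h2
          exact bool_of_true_le h2
        · exact fun x _ y _ h => τ.injective h
      calc wt (fun i => decide (∃ a ∈ X i, chi Y a ≤ u))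
          ≤ (Finset.univ.filter fun i => p (a i)).card := hlow
        _ = (Finset.univ.filter fun j => p (c j)).card := hcount'
        _ ≤ wt u := hup
    · -- inclusion
      intro i x hx
      show (decide (∃ a ∈ X i, chi Y a ≤ chi Y x) : Bool) = true
      exact decide_eq_true ⟨x, hx, le_refl _⟩
  · -- backward direction
    rintro ⟨f, hmono, hcon, hsub⟩ m ⟨a, σ, ha, rfl⟩
    set t : Fin n → Finset (Fin n) := fun i => Finset.univ.filter fun j => a i ∈ Y j with ht
    have hall : ∀ s : Finset (Fin n), s.card ≤ (s.biUnion t).card := by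
      intro s
      set u : Fin n → Bool := fun j => decide (∃ i ∈ s, a i ∈ Y j) with hu
      have h1 : ∀ i ∈ s, chi Y (a i) ≤ u := by
        intro i hi j
        by_cases h : a i ∈ Y j
        · have : u j = true := decide_eq_true ⟨i, hi, h⟩
          rw [this]; exact Bool.le_true _
        · have : chi Y (a i) j = false := decide_eq_false h
          rw [this]; exact Bool.false_le _
      have h2 : ∀ i ∈ s, f u (σ i) = true := by
        intro i hi
        have hfl : f (chi Y (a i)) (σ i) = true := hsub (σ i) (ha i)
        have := hmono (h1 i hi) (σ i)
        rw [hfl] at this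
        exact bool_of_true_le this
      have h3 : s.image σ ⊆ Finset.univ.filter fun j => f u j = true := by
        intro j hj
        obtain ⟨i, hi, rfl⟩ := Finset.mem_image.mp hj
        simp only [Finset.mem_filter, Finset.mem_univ, true_and]
        exact h2 i hi
      have h4 : s.biUnion t = Finset.univ.filter fun j => u j = true := by
        ext j
        simp [ht, hu, Finset.mem_biUnion]
      calc s.card = (s.image σ).card := (Finset.card_image_of_injective s σ.injective).symm
        _ ≤ wt (f u) := Finset.card_le_card h3
        _ ≤ wt u := hcon u
        _ = (s.biUnion t).card := by rw [h4]; rfl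
    obtain ⟨g, hginj, hgt⟩ := (Finset.all_card_le_biUnion_card_iff_exists_injective t).mp hall
    have hgbij : Function.Bijective g := Finite.injective_iff_bijective.mp hginj
    refine ⟨a, Equiv.ofBijective g hgbij, fun i => ?_, rfl⟩
    have := hgt i
    simp only [ht, Finset.mem_filter, Finset.mem_univ, true_and] at this
    exact this
end

section
/- A function f : B^n → B^n is strictly increasing (u < v implies f(u) < f(v)) if and only if f is increasing (monotone) and |f(u)| = |u| for all u ∈ B^n. -/
open scoped Classical

section aux
variable {n : ℕ}

lemma bool_le {a b : Bool} (h : a ≤ b) (ha : a = true) : b = true := by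
  subst ha; exact top_le_iff.mp h

lemma wt_mono {u v : Fin n → Bool} (h : u ≤ v) : wt u ≤ wt v := by
  apply Finset.card_le_card
  intro i hi
  simp only [Finset.mem_filter, Finset.mem_univ, true_and] at hi ⊢
  exact bool_le (h i) hi

lemma wt_strictMono {u v : Fin n → Bool} (h : u < v) : wt u < wt v := by
  apply Finset.card_lt_card
  constructor
  · intro i hi
    simp only [Finset.mem_filter, Finset.mem_univ, true_and] at hi ⊢
    exact bool_le (h.le i) hi
  · intro hsub
    obtain ⟨hle, i, hi⟩ := Pi.lt_def.mp h
    obtain ⟨h1, h2⟩ := Bool.lt_iff.mp hi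
    have := hsub (by simp [h2] : i ∈ Finset.univ.filter fun j => v j = true)
    simp [h1] at this

lemma eq_of_le_of_wt {u v : Fin n → Bool} (h : u ≤ v) (hw : wt u = wt v) : u = v := by
  by_contra hne
  exact absurd hw (Nat.ne_of_lt (wt_strictMono (lt_of_le_of_ne h hne)))

lemma wt_update_false {u : Fin n → Bool} {i : Fin n} (hi : u i = true) :
    wt (Function.update u i false) + 1 = wt u := by
  have : (Finset.univ.filter fun j => Function.update u i false j = true)
      = (Finset.univ.filter fun j => u j = true).erase i := by
    ext j
    rcases eq_or_ne j i with rfl | hji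
    · simp [Function.update_self]
    · simp [Function.update_of_ne hji, hji]
  rw [wt, this, Finset.card_erase_of_mem (by simp [hi]), wt]
  have : 0 < (Finset.univ.filter fun j => u j = true).card :=
    Finset.card_pos.mpr ⟨i, by simp [hi]⟩
  omega

lemma wt_update_true {u : Fin n → Bool} {i : Fin n} (hi : u i = false) :
    wt (Function.update u i true) = wt u + 1 := by
  have h2 : (Function.update u i true) i = true := by simp
  have := wt_update_false (u := Function.update u i true) (i := i) h2
  have he : Function.update (Function.update u i true) i false = u := by
    ext j
    rcases eq_or_ne j i with rfl | hji
    · simp [hi]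
    · simp [Function.update_of_ne hji]
  rw [he] at this
  omega

lemma wt_le {u : Fin n → Bool} : wt u ≤ n := by
  simpa [wt] using Finset.card_filter_le Finset.univ fun i => u i = true

lemma lb {f : (Fin n → Bool) → (Fin n → Bool)} (hf : StrictMono f) :
    ∀ k (u : Fin n → Bool), wt u = k → wt u ≤ wt (f u) := by
  intro k
  induction k with
  | zero => intro u hu; omega
  | succ k ih =>
    intro u hu
    have hpos : 0 < (Finset.univ.filter fun i => u i = true).card := by
      rw [← wt] at *; omega
    obtain ⟨i, hi⟩ := Finset.card_pos.mp hpos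
    simp only [Finset.mem_filter, Finset.mem_univ, true_and] at hi
    set u' := Function.update u i false with hu'
    have hwu' : wt u' + 1 = wt u := wt_update_false hi
    have hlt : u' < u := by
      apply lt_of_le_of_ne
      · intro j
        rcases eq_or_ne j i with rfl | hji
        · simp [hu', Function.update_self]
        · simp [hu', Function.update_of_ne hji]
      · intro he
        have : u' i = u i := congrFun he i
        simp [hu', hi] at this
    have h1 : wt u' ≤ wt (f u') := ih u' (by omega)
    have h2 : wt (f u') < wt (f u) := wt_strictMono (hf hlt)
    omega

lemma ub {f : (Fin n → Bool) → (Fin n → Bool)} (hf : StrictMono f) :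
    ∀ k (u : Fin n → Bool), n - wt u = k → wt (f u) ≤ wt u := by
  intro k
  induction k with
  | zero =>
    intro u hu
    have := wt_le (u := u)
    have := wt_le (u := f u)
    omega
  | succ k ih =>
    intro u hu
    have hlt' : wt u < n := by omega
    have : ∃ i, u i = false := by
      by_contra hc
      push_neg at hc
      have hall : ∀ i, u i = true := fun i => by
        cases hui : u i with
        | false => exact absurd hui (hc i)
        | true => rfl
      have : wt u = n := by rw [wt]; simp [hall]
      omega
    obtain ⟨i, hi⟩ := this
    set u'' := Function.update u i true with hu''
    have hw : wt u'' = wt u + 1 := wt_update_true hi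
    have hlt : u < u'' := by
      apply lt_of_le_of_ne
      · intro j
        rcases eq_or_ne j i with rfl | hji
        · simp [hu'', hi]
        · simp [hu'', Function.update_of_ne hji]
      · intro he
        have : u i = u'' i := congrFun he i
        simp [hu'', hi] at this
    have h1 : wt (f u'') ≤ wt u'' := ih u'' (by omega)
    have h2 : wt (f u) < wt (f u'') := wt_strictMono (hf hlt)
    omega

end aux

theorem stmt10 {n : ℕ} (f : (Fin n → Bool) → (Fin n → Bool)) :
    StrictMono f ↔ (Monotone f ∧ ∀ u, wt (f u) = wt u) := by
  constructor
  · intro hf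
    refine ⟨hf.monotone, fun u => ?_⟩
    exact le_antisymm (ub hf (n - wt u) u rfl) (lb hf (wt u) u rfl)
  · rintro ⟨hmono, hwt⟩ u v huv
    apply lt_of_le_of_ne (hmono huv.le)
    intro he
    have : wt u = wt v := by rw [← hwt u, ← hwt v, he]
    exact absurd this (Nat.ne_of_lt (wt_strictMono huv))
end

section
/- For any n-tuple Y of subsets of N with Y_1 ∩ Y_2 nonempty, every unordered section of (Y_1 ∩ Y_2, Y_1 ∪ Y_2, Y_3, …, Y_n) is an unordered section of (Y_1, Y_2, Y_3, …, Y_n). -/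
open scoped Classical

theorem stmt11 {N : Type*} {n : ℕ} (Y : Fin (n + 2) → Set N)
    (hY : ∀ i, (Y i).Nonempty) (hcap : (Y 0 ∩ Y 1).Nonempty) :
    Sec (fun i : Fin (n + 2) =>
        if i = 0 then Y 0 ∩ Y 1 else if i = 1 then Y 0 ∪ Y 1 else Y i) ⊆ Sec Y := by
  rintro m ⟨a, σ, ha, rfl⟩
  by_cases h : a (σ.symm 1) ∈ Y 1
  · refine ⟨a, σ, fun i => ?_, rfl⟩
    have hi := ha i
    by_cases h0 : σ i = 0
    · rw [h0]; rw [h0] at hi; simp only [if_pos rfl] at hi; exact hi.1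
    · by_cases h1 : σ i = 1
      · have hii : i = σ.symm 1 := by rw [← h1]; simp
        rw [h1, hii]; exact h
      · simp only [if_neg h0, if_neg h1] at hi; exact hi
  · refine ⟨a, (Equiv.swap 0 1) * σ, fun i => ?_, rfl⟩
    have hi := ha i
    by_cases h0 : σ i = 0
    · rw [Equiv.Perm.mul_apply, h0, Equiv.swap_apply_left]
      rw [h0] at hi; simp only [if_pos rfl] at hi; exact hi.2
    · by_cases h1 : σ i = 1
      · rw [Equiv.Perm.mul_apply, h1, Equiv.swap_apply_right]
        have hii : i = σ.symm 1 := by rw [← h1]; simp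
        rw [h1] at hi
        simp only [if_neg (one_ne_zero : (1 : Fin (n+2)) ≠ 0), if_pos rfl] at hi
        rcases hi with hi | hi
        · exact hi
        · exact absurd (hii ▸ hi) (hii ▸ h)
      · rw [Equiv.Perm.mul_apply, Equiv.swap_apply_of_ne_of_ne h0 h1]
        simp only [if_neg h0, if_neg h1] at hi; exact hi
end

section
/- If Sec(X) ⊆ Sec(Y), then for every a ∈ N the number of components of X containing a is at most the number of components of Y containing a, i.e. |χ_X(a)| ≤ |χ_Y(a)|. -/
open scoped Classical

lemma count_ofFn' {N : Type*} {n : ℕ} (f : Fin n → N) (a : N) :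
    Multiset.count a (List.ofFn f : Multiset N) =
      (Finset.univ.filter fun i => f i = a).card := by
  classical
  rw [List.ofFn_eq_map]
  rw [show ((List.finRange n).map f : Multiset N) = Multiset.map f Finset.univ.val by
    simp [Finset.univ]; rfl]
  rw [Multiset.count_map, Finset.card_filter]
  simp [Finset.card, eq_comm]

theorem stmt14 {N : Type*} {n : ℕ} (hn : 1 ≤ n) (X Y : Fin n → Set N)
    (hX : ∀ i, (X i).Nonempty) (hY : ∀ i, (Y i).Nonempty)
    (h : Sec X ⊆ Sec Y) :
    ∀ a : N, wt (chi X a) ≤ wt (chi Y a) := by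
  classical
  intro a
  set b : Fin n → N := fun i => if a ∈ X i then a else (hX i).some with hb
  have hbX : ∀ i, b i ∈ X i := by
    intro i
    by_cases hi : a ∈ X i <;> simp [hb, hi, (hX i).some_mem]
  have hmem : (List.ofFn b : Multiset N) ∈ Sec X :=
    ⟨b, Equiv.refl _, fun i => hbX i, rfl⟩
  obtain ⟨c, σ, hcY, hEq⟩ := h hmem
  have key : Multiset.count a (List.ofFn b : Multiset N)
      = Multiset.count a (List.ofFn c : Multiset N) := by rw [hEq]
  rw [count_ofFn', count_ofFn'] at key
  have h1 : wt (chi X a) ≤ (Finset.univ.filter fun i => b i = a).card := by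
    apply Finset.card_le_card
    intro i hi
    simp only [wt, chi, Finset.mem_filter, decide_eq_true_eq] at hi ⊢
    exact ⟨hi.1, by simp [hb, hi.2]⟩
  have h2 : (Finset.univ.filter fun i => c i = a).card ≤
      (Finset.univ.filter fun i => a ∈ Y (σ i)).card := by
    apply Finset.card_le_card
    intro i hi
    simp only [Finset.mem_filter] at hi ⊢
    exact ⟨hi.1, hi.2 ▸ hcY i⟩
  have h3 : (Finset.univ.filter fun i => a ∈ Y (σ i)).card = wt (chi Y a) := by
    unfold wt
    rw [← Finset.card_image_of_injective (Finset.univ.filter fun i => a ∈ Y (σ i)) σ.injective]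
    congr 1
    ext j
    simp only [Finset.mem_image, Finset.mem_filter, Finset.mem_univ, true_and, chi,
      decide_eq_true_eq]
    constructor
    · rintro ⟨i, hi, rfl⟩; exact hi
    · intro hj; exact ⟨σ.symm j, by simpa using hj, by simp⟩
  calc wt (chi X a) ≤ _ := h1
    _ = _ := key
    _ ≤ _ := h2
    _ = _ := h3
end

section
/- If f : B^n → B^n is increasing and contractive, then for every n-tuple Y of subsets of N, every unordered section of f̂(Y) (when all its components are nonempty) is an unordered section of Y. -/
open scoped Classical

theorem stmt17 {N : Type*} {n : ℕ} (f : (Fin n → Bool) → (Fin n → Bool))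
    (hmono : Monotone f) (hcontr : ∀ u, wt (f u) ≤ wt u)
    (Y : Fin n → Set N) (hne : ∀ i, (liftFn f Y i).Nonempty) :
    Sec (liftFn f Y) ⊆ Sec Y := by
  rintro m ⟨a, σ, ha, rfl⟩
  -- t i : indices j with a i ∈ Y j
  set t : Fin n → Finset (Fin n) := fun i => Finset.univ.filter (fun j => a i ∈ Y j) with ht
  have hall : ∀ s : Finset (Fin n), s.card ≤ (s.biUnion t).card := by
    intro s
    set u : Fin n → Bool := fun j => decide (j ∈ s.biUnion t) with hu
    have hwtu : wt u = (s.biUnion t).card := by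
      unfold wt
      congr 1
      ext j
      simp [hu]
    have hle : ∀ i ∈ s, chi Y (a i) ≤ u := by
      intro i hi j
      simp only [chi, hu]
      by_cases h : a i ∈ Y j
      · have : j ∈ s.biUnion t := Finset.mem_biUnion.mpr ⟨i, hi, by simp [ht, h]⟩
        simp [h, this]
      · simp [h]
    have himg : Finset.image σ s ⊆ Finset.univ.filter (fun j => f u j = true) := by
      intro j hj
      obtain ⟨i, hi, rfl⟩ := Finset.mem_image.mp hj
      have h1 : f (chi Y (a i)) ≤ f u := hmono (hle i hi)
      have h2 : f (chi Y (a i)) (σ i) = true := ha i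
      have := h1 (σ i)
      rw [h2] at this
      simp only [Finset.mem_filter, Finset.mem_univ, true_and]
      exact le_antisymm (Bool.le_true _) this
    calc s.card = (Finset.image σ s).card :=
          (Finset.card_image_of_injective s σ.injective).symm
      _ ≤ wt (f u) := Finset.card_le_card himg
      _ ≤ wt u := hcontr u
      _ = (s.biUnion t).card := hwtu
  obtain ⟨g, hginj, hg⟩ := (Finset.all_card_le_biUnion_card_iff_exists_injective t).mp hall
  have hgbij : Function.Bijective g := Finite.injective_iff_bijective.mp hginj
  refine ⟨a, Equiv.ofBijective g hgbij, fun i => ?_, rfl⟩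
  have := hg i
  simp only [ht, Finset.mem_filter] at this
  exact this.2
end
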